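/- Let X and K be topological spaces and let d : K → X and s : X → K be any continuous maps. Then the mapping telescope of d ∘ s : X → X is homotopy equivalent to the mapping telescope of s ∘ d : K → K. -/

import Mathlib

/-- The relation generating the mapping telescope of `α : K → K`:
`(x, i, 1) ∼ (α x, i + 1, 0)`. -/
def TelescopeRel {K : Type*} (α : K → K) :
    K × ℕ × unitInterval → K × ℕ × unitInterval → Prop :=
  fun p q => p.2.2 = 1 ∧ q = (α p.1, p.2.1 + 1, 0)

/-- The mapping telescope of `α : K → K`: the quotient of `K × ℕ × [0,1]` by the
identifications `(x, i, 1) ∼ (α x, i + 1, 0)`. -/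
def MappingTelescope {K : Type*} (α : K → K) : Type _ :=
  Quot (TelescopeRel α)

/-- The mapping telescope carries the quotient topology. -/
instance {K : Type*} [TopologicalSpace K] (α : K → K) :
    TopologicalSpace (MappingTelescope α) :=
  inferInstanceAs (TopologicalSpace (Quot (TelescopeRel α)))

namespace MTAux

open Set unitInterval Topology

variable {K L : Type*} [TopologicalSpace K] [TopologicalSpace L]

lemma isQM (α : K → K) :
    IsQuotientMap (Quot.mk (TelescopeRel α) : _ → MappingTelescope α) :=
  isQuotientMap_quot_mk

/-- A map of telescopes induced by `f : K → L` (with index shift `c`) whenever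
`β ∘ f = f ∘ α`. -/
def telMap (α : K → K) (β : L → L) (f : C(K, L)) (c : ℕ)
    (hcomm : ∀ x, β (f x) = f (α x)) :
    C(MappingTelescope α, MappingTelescope β) where
  toFun := Quot.map (fun p => (f p.1, p.2.1 + c, p.2.2))
    (by
      rintro ⟨x, i, t⟩ q ⟨h1, rfl⟩
      exact ⟨h1, by simp [hcomm x, Nat.add_right_comm]⟩)
  continuous_toFun := by
    refine (isQM α).continuous_iff.mpr ?_
    exact continuous_quot_mk.comp
      ((f.continuous.comp continuous_fst).prodMk
        ((continuous_fst.add continuous_const).comp continuous_snd |>.prodMk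
          (continuous_snd.comp continuous_snd)))

@[simp] lemma telMap_mk (α : K → K) (β : L → L) (f : C(K, L)) (c : ℕ)
    (hcomm : ∀ x, β (f x) = f (α x)) (p : K × ℕ × unitInterval) :
    telMap α β f c hcomm (Quot.mk _ p) = Quot.mk _ (f p.1, p.2.1 + c, p.2.2) := rfl

/-- The lift of the sliding homotopy. -/
noncomputable def slide (α : K → K) (u : unitInterval) (p : K × ℕ × unitInterval) :
    MappingTelescope α :=
  if (p.2.2 : ℝ) + u ≤ 1 then
    Quot.mk _ (p.1, p.2.1, projIcc 0 1 zero_le_one ((p.2.2 : ℝ) + u))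
  else
    Quot.mk _ (α p.1, p.2.1 + 1, projIcc 0 1 zero_le_one ((p.2.2 : ℝ) + u - 1))

lemma slide_wd (α : K → K) (u : unitInterval) {p q : K × ℕ × unitInterval}
    (h : TelescopeRel α p q) : slide α u p = slide α u q := by
  obtain ⟨x, i, t⟩ := p
  obtain ⟨h1, rfl⟩ := h
  simp only at h1
  subst h1
  unfold slide
  simp only
  rcases eq_or_lt_of_le u.2.1 with hu0 | hu0
  · have : (u : ℝ) = 0 := hu0.symm
    rw [this]
    norm_num
    exact Quot.sound ⟨rfl, by norm_num⟩
  · have h1 : ¬ ((1 : ℝ) + u ≤ 1) := by push_neg; linarith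
    have h2 : ((0:ℝ) + u ≤ 1) := by simpa using u.2.2
    rw [Set.Icc.coe_one, Set.Icc.coe_zero] at *
    unfold MappingTelescope
    rw [if_neg h1, if_pos h2]
    norm_num

/-- The sliding homotopy, as a continuous map on `I × Tel α`. -/
noncomputable def slideMap (α : K → K) (hα : Continuous α) :
    C(unitInterval × MappingTelescope α, MappingTelescope α) where
  toFun z := Quot.lift (slide α z.1) (fun _ _ h => slide_wd α z.1 h) z.2
  continuous_toFun := by
    apply (isQM α).continuous_lift_prod_right
    have hcont : Continuous fun w : unitInterval × (K × ℕ × unitInterval) =>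
        slide α w.1 w.2 := by
      unfold slide
      apply Continuous.if_le
      · exact continuous_quot_mk.comp
          ((continuous_fst.comp continuous_snd).prodMk
            ((continuous_fst.comp (continuous_snd.comp continuous_snd)).prodMk
              (continuous_projIcc.comp
                ((continuous_subtype_val.comp
                    (continuous_snd.comp (continuous_snd.comp continuous_snd))).add
                  (continuous_subtype_val.comp continuous_fst)))))
      · exact continuous_quot_mk.comp
          (((hα.comp continuous_fst).comp continuous_snd).prodMk
            ((by fun_prop : Continuous fun x : unitInterval × (K × ℕ × unitInterval) =>
                x.2.2.1 + 1).prodMk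
              (continuous_projIcc.comp
                (((continuous_subtype_val.comp
                      (continuous_snd.comp (continuous_snd.comp continuous_snd))).add
                    (continuous_subtype_val.comp continuous_fst)).sub
                  continuous_const))))
      · exact (continuous_subtype_val.comp
            (continuous_snd.comp (continuous_snd.comp continuous_snd))).add
          (continuous_subtype_val.comp continuous_fst)
      · exact continuous_const
      · rintro ⟨u, x, i, t⟩ heq
        simp only at heq
        rw [heq]
        norm_num
        exact Quot.sound ⟨rfl, by norm_num⟩
    exact hcont

/-- The shift map `(x,i,t) ↦ (α x, i+1, t)` is homotopic to the identity. -/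
lemma shift_homotopic_id (α : C(K, K)) :
    (telMap ⇑α ⇑α α 1 (fun _ => rfl)).Homotopic (ContinuousMap.id _) := by
  refine ContinuousMap.Homotopic.symm ⟨⟨slideMap ⇑α α.continuous, ?_, ?_⟩⟩
  · intro z
    induction z using Quot.ind with
    | _ p =>
    obtain ⟨x, i, t⟩ := p
    show slide ⇑α 0 (x, i, t) = _
    unfold slide
    have ht : (t : ℝ) + (0 : unitInterval) ≤ 1 := by simpa using t.2.2
    unfold MappingTelescope
    rw [if_pos ht]
    simp only [Set.Icc.coe_zero, add_zero, ContinuousMap.id_apply]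
    rw [projIcc_of_mem _ t.2]
    rfl
  · intro z
    induction z using Quot.ind with
    | _ p =>
    obtain ⟨x, i, t⟩ := p
    show slide ⇑α 1 (x, i, t) = _
    unfold slide
    rw [telMap_mk]
    simp only [Set.Icc.coe_one]
    unfold MappingTelescope
    rcases le_or_gt ((t : ℝ) + 1) 1 with h | h
    · have ht0 : (t : ℝ) = 0 := le_antisymm (by linarith) t.2.1
      rw [if_pos h, ht0]
      norm_num
      have : t = 0 := Subtype.ext ht0
      rw [this]
      exact Quot.sound ⟨rfl, rfl⟩
    · rw [if_neg (not_le.mpr h)]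
      congr 2
      simp only [add_sub_cancel_right]
      rw [projIcc_of_mem _ t.2]

end MTAux

/-- For any continuous maps `d : K → X` and `s : X → K`, the mapping telescope of
`d ∘ s : X → X` is homotopy equivalent to the mapping telescope of `s ∘ d : K → K`. -/
theorem mappingTelescope_comp_homotopyEquiv
    {X K : Type*} [TopologicalSpace X] [TopologicalSpace K]
    (d : C(K, X)) (s : C(X, K)) :
    Nonempty (ContinuousMap.HomotopyEquiv
      (MappingTelescope (⇑d ∘ ⇑s)) (MappingTelescope (⇑s ∘ ⇑d))) := by
  classical
  refine ⟨⟨MTAux.telMap (⇑d ∘ ⇑s) (⇑s ∘ ⇑d) s 0 (fun _ => rfl),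
          MTAux.telMap (⇑s ∘ ⇑d) (⇑d ∘ ⇑s) d 1 (fun _ => rfl), ?_, ?_⟩⟩
  · have hE : (MTAux.telMap (⇑s ∘ ⇑d) (⇑d ∘ ⇑s) d 1 (fun _ => rfl)).comp
        (MTAux.telMap (⇑d ∘ ⇑s) (⇑s ∘ ⇑d) s 0 (fun _ => rfl))
        = MTAux.telMap (⇑d ∘ ⇑s) (⇑d ∘ ⇑s) (d.comp s) 1 (fun _ => rfl) := by
      ext z
      induction z using Quot.ind with
      | _ p => rfl
    rw [hE]
    exact MTAux.shift_homotopic_id (d.comp s)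
  · have hE : (MTAux.telMap (⇑d ∘ ⇑s) (⇑s ∘ ⇑d) s 0 (fun _ => rfl)).comp
        (MTAux.telMap (⇑s ∘ ⇑d) (⇑d ∘ ⇑s) d 1 (fun _ => rfl))
        = MTAux.telMap (⇑s ∘ ⇑d) (⇑s ∘ ⇑d) (s.comp d) 1 (fun _ => rfl) := by
      ext z
      induction z using Quot.ind with
      | _ p => rfl
    rw [hE]
    exact MTAux.shift_homotopic_id (s.comp d)
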